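/- arXiv:1405.1918 — 3 statements merged into one kernel-verified Lean document; each statement's English description precedes it below -/
import Mathlib

section
/- Let λ > 0, φ ∈ (0, π), and x ∈ ℝ. Then |P_n^{(λ)}(x; φ)| ≤ (1+n)^σ for all n ∈ ℕ₀, where σ = 2|λ+ix| + 1. -/
open Complex Finset

/-- The Pochhammer symbol (rising factorial) `(z)_n = z(z+1)⋯(z+n-1)`. -/
noncomputable def poch (z : ℂ) (n : ℕ) : ℂ := ∏ i ∈ Finset.range n, (z + i)

/-- The Meixner–Pollaczek polynomial `P_n^{(λ)}(x; φ)` via its terminating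
`₂F₁(-n, λ+ix; 2λ; 1-e^{-2iφ})` representation. -/
noncomputable def MP (n : ℕ) (lam : ℝ) (x : ℝ) (phi : ℝ) : ℂ :=
  poch ((2 * lam : ℝ) : ℂ) n / (n.factorial : ℂ) * Complex.exp (Complex.I * n * phi) *
    ∑ k ∈ Finset.range (n + 1),
      poch (-(n : ℂ)) k * poch ((lam : ℂ) + Complex.I * x) k /
          (poch ((2 * lam : ℝ) : ℂ) k * k.factorial) *
        (1 - Complex.exp (-2 * Complex.I * phi)) ^ k

lemma poch_zero (z : ℂ) : poch z 0 = 1 := by simp [poch]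

lemma poch_succ (z : ℂ) (n : ℕ) : poch z (n+1) = poch z n * (z + n) := by
  simp [poch, Finset.prod_range_succ]

lemma poch_succ_left (z : ℂ) (n : ℕ) : poch z (n+1) = z * poch (z+1) n := by
  rw [poch, Finset.prod_range_succ', mul_comm]
  simp only [Nat.cast_zero, add_zero, poch]
  congr 1
  apply Finset.prod_congr rfl
  intro i _
  push_cast
  ring

lemma poch_add (z : ℂ) (m k : ℕ) : poch z (m+k) = poch z m * poch (z+m) k := by
  rw [poch, Finset.prod_range_add]
  congr 1
  apply Finset.prod_congr rfl
  intro i _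
  push_cast
  ring

lemma poch_ne_zero_of_re_pos {z : ℂ} (hz : 0 < z.re) (n : ℕ) : poch z n ≠ 0 := by
  rw [poch]
  apply Finset.prod_ne_zero_iff.2
  intro i _ h
  have h2 : (z + i).re = z.re + i := by simp
  rw [h] at h2
  simp at h2
  have : (0:ℝ) < z.re + i := by positivity
  rw [← h2] at this
  exact lt_irrefl 0 this

lemma poch_neg_nat (n k : ℕ) (hk : k ≤ n) :
    poch (-(n:ℂ)) k = (-1)^k * (Nat.descFactorial n k : ℂ) := by
  induction k with
  | zero => simp [poch_zero]
  | succ k ih =>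
    rw [poch_succ, ih (Nat.le_of_succ_le hk)]
    rw [Nat.descFactorial_succ]
    have h : (-(n:ℂ) + k) = -((n - k : ℕ) : ℂ) := by
      have : ((n - k : ℕ) : ℂ) = (n : ℂ) - k := by
        push_cast [Nat.cast_sub (Nat.le_of_succ_le hk)]; ring
      rw [this]; ring
    rw [h]
    push_cast
    ring

lemma vandermonde (c : ℂ) : ∀ (N : ℕ) (d : ℂ),
    ∑ j ∈ Finset.range (N+1), (-1:ℂ)^j * (N.choose j) * poch c j * poch (d+j) (N-j)
      = poch (d-c) N := by
  intro N
  induction N with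
  | zero => intro d; simp [poch_zero]
  | succ N ih =>
    intro d
    have hsplit : ∑ j ∈ Finset.range (N+1+1), (-1:ℂ)^j * ((N+1).choose j) * poch c j * poch (d+j) (N+1-j)
        = (∑ j ∈ Finset.range (N+1+1), (-1:ℂ)^j * (N.choose j) * poch c j * poch (d+j) (N+1-j))
          - ∑ i ∈ Finset.range (N+1), (-1:ℂ)^i * (N.choose i) * poch c (i+1) * poch (d+(i+1:ℕ)) (N-i) := by
      rw [Finset.sum_range_succ' (fun j => (-1:ℂ)^j * ((N+1).choose j) * poch c j * poch (d+j) (N+1-j)),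
          Finset.sum_range_succ' (fun j => (-1:ℂ)^j * (N.choose j) * poch c j * poch (d+j) (N+1-j))]
      have h : ∀ i ∈ Finset.range (N+1),
          (-1:ℂ)^(i+1) * (((N+1).choose (i+1) : ℕ) : ℂ) * poch c (i+1) * poch (d+((i+1:ℕ):ℂ)) (N+1-(i+1))
          = ((-1:ℂ)^(i+1) * ((N.choose (i+1) : ℕ) : ℂ) * poch c (i+1) * poch (d+((i+1:ℕ):ℂ)) (N+1-(i+1))
            - (-1:ℂ)^i * ((N.choose i : ℕ) : ℂ) * poch c (i+1) * poch (d+((i+1:ℕ):ℂ)) (N-i)) := by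
        intro i _
        have h1 : N+1-(i+1) = N-i := by omega
        rw [h1, Nat.choose_succ_succ]
        push_cast
        ring
      rw [Finset.sum_congr rfl h, Finset.sum_sub_distrib]
      simp only [Nat.choose_zero_right, Nat.cast_one, poch_zero, Nat.cast_zero, add_zero]
      ring
    have hdrop : ∑ j ∈ Finset.range (N+1+1), (-1:ℂ)^j * (N.choose j) * poch c j * poch (d+j) (N+1-j)
        = ∑ j ∈ Finset.range (N+1), (-1:ℂ)^j * (N.choose j) * poch c j * poch (d+j) (N+1-j) := by
      rw [Finset.sum_range_succ]
      simp [Nat.choose_succ_self]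
    have hB : ∑ j ∈ Finset.range (N+1), (-1:ℂ)^j * (N.choose j) * poch c j * poch (d+j) (N+1-j)
        = (d + N) * poch (d-c) N := by
      rw [← ih d, Finset.mul_sum]
      apply Finset.sum_congr rfl
      intro j hj
      have hj' : j ≤ N := Nat.lt_succ_iff.1 (Finset.mem_range.1 hj)
      have h1 : N+1-j = (N-j)+1 := by omega
      rw [h1, poch_succ]
      have h2 : d + (j:ℂ) + ((N-j : ℕ):ℂ) = d + N := by
        have : ((N-j:ℕ):ℂ) = (N:ℂ) - j := by push_cast [Nat.cast_sub hj']; ring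
        rw [this]; ring
      rw [h2]
      ring
    have hA : ∑ i ∈ Finset.range (N+1), (-1:ℂ)^i * (N.choose i) * poch c (i+1) * poch (d+(i+1:ℕ)) (N-i)
        = (d + N) * poch (d-c) N - (d-c) * poch (d+1-c) N := by
      have expand : ∀ i ∈ Finset.range (N+1),
          (-1:ℂ)^i * ((N.choose i : ℕ):ℂ) * poch c (i+1) * poch (d+((i+1:ℕ):ℂ)) (N-i)
          = ((-1:ℂ)^i * (N.choose i) * poch c i * poch (d+i) (N-i)) * (d+N)
            - (d-c) * ((-1:ℂ)^i * (N.choose i) * poch c i * poch ((d+1)+i) (N-i)) := by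
        intro i hi
        have hi' : i ≤ N := Nat.lt_succ_iff.1 (Finset.mem_range.1 hi)
        have h1 : (d+((i+1:ℕ):ℂ)) = (d + i) + 1 := by push_cast; ring
        rw [h1, poch_succ]
        rw [show (d+1+(i:ℂ)) = d + (i:ℂ) + 1 from by ring]
        have h3 : (d + (i:ℂ)) * poch (d + i + 1) (N-i) = poch (d+i) (N-i) * (d+N) := by
          rw [← poch_succ_left, poch_succ]
          have h6 : d + (i:ℂ) + ((N-i:ℕ):ℂ) = d + N := by
            have : ((N-i:ℕ):ℂ) = (N:ℂ) - i := by push_cast [Nat.cast_sub hi']; ring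
            rw [this]; ring
          rw [h6]
        linear_combination ((-1:ℂ)^i * ((N.choose i : ℕ):ℂ) * poch c i) * h3
      rw [Finset.sum_congr rfl expand, Finset.sum_sub_distrib, ← Finset.sum_mul, ← Finset.mul_sum, ih d]
      have : ∑ i ∈ Finset.range (N+1), (-1:ℂ)^i * (N.choose i) * poch c i * poch ((d+1)+i) (N-i)
          = poch (d+1-c) N := ih (d+1)
      rw [this]
      ring
    rw [hsplit, hdrop, hB, hA]
    have : poch (d-c) (N+1) = (d-c) * poch (d-c+1) N := poch_succ_left _ _
    rw [this]
    have : d - c + 1 = d + 1 - c := by ring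
    rw [this]
    ring


lemma MP_eq (lam x phi : ℝ) (hlam : 0 < lam) (n : ℕ) :
    MP n lam x phi = ∑ m ∈ Finset.range (n+1),
      poch ((lam:ℂ) + Complex.I*x) m * poch ((lam:ℂ) - Complex.I*x) (n-m)
        / ((m.factorial : ℂ) * ((n-m).factorial : ℂ))
        * Complex.exp (Complex.I * phi * ((n:ℂ) - 2*m)) := by
  set L : ℂ := ((2 * lam : ℝ) : ℂ) with hL
  set a : ℂ := (lam:ℂ) + Complex.I*x with ha
  set q : ℂ := Complex.exp (-2 * Complex.I * phi) with hq
  have hLre : (0:ℝ) < L.re := by rw [hL]; simp; linarith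
  have hLm_re : ∀ m : ℕ, (0:ℝ) < (L + (m:ℂ)).re := by
    intro m; simp [hL]; positivity
  have hba : (lam:ℂ) - Complex.I*x = L - a := by rw [hL, ha]; push_cast; ring
  set G : ℕ → ℕ → ℂ := fun k m =>
    poch (-(n : ℂ)) k * poch a k / (poch L k * k.factorial) * ((-q)^m * ((k.choose m : ℕ) : ℂ))
    with hG
  have hpow : ∀ k, (1 - q)^k = ∑ m ∈ Finset.range (k+1), (-q)^m * ((k.choose m : ℕ) : ℂ) := by
    intro k
    rw [sub_eq_add_neg 1 q, add_comm, add_pow]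
    simp
  have h1 : ∑ k ∈ Finset.range (n+1),
      poch (-(n : ℂ)) k * poch a k / (poch L k * k.factorial) * (1 - q) ^ k
      = ∑ k ∈ Finset.range (n+1), ∑ m ∈ Finset.range (k+1), G k m := by
    apply Finset.sum_congr rfl
    intro k _
    rw [hpow k, Finset.mul_sum]
  have h2 : ∑ k ∈ Finset.range (n+1), ∑ m ∈ Finset.range (k+1), G k m
      = ∑ m ∈ Finset.range (n+1), ∑ k ∈ Finset.Ico m (n+1), G k m := by
    have := Finset.sum_Ico_Ico_comm 0 (n+1) (fun m k => G k m)
    simp only [← Finset.range_eq_Ico] at this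
    exact this.symm
  have h3 : ∀ m, m ≤ n → ∑ k ∈ Finset.Ico m (n+1), G k m
      = poch (-(n : ℂ)) m * poch a m * (-q)^m * poch (L-a) (n-m)
        / (poch L m * (m.factorial : ℂ) * poch (L + m) (n-m)) := by
    intro m hm
    rw [Finset.sum_Ico_eq_sum_range]
    have hNm : n + 1 - m = (n - m) + 1 := by omega
    rw [hNm]
    set N := n - m with hN
    have key : ∀ j ∈ Finset.range (N+1), G (m+j) m
        = (poch (-(n : ℂ)) m * poch a m * (-q)^m
            / (poch L m * (m.factorial : ℂ) * poch (L + m) N))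
          * ((-1:ℂ)^j * ((N.choose j : ℕ) : ℂ) * poch (a+m) j * poch ((L+m)+j) (N-j)) := by
      intro j hj
      have hjN : j ≤ N := Nat.lt_succ_iff.1 (Finset.mem_range.1 hj)
      rw [hG]
      simp only
      rw [poch_add (-(n:ℂ)) m j, poch_add a m j, poch_add L m j]
      -- poch (-(n:ℂ)+m) j = (-1)^j * j! * (N.choose j)
      have e1 : poch (-(n:ℂ) + m) j = (-1:ℂ)^j * ((j.factorial : ℕ) : ℂ) * ((N.choose j : ℕ) : ℂ) := by
        have : (-(n:ℂ) + m) = -((N:ℕ):ℂ) := by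
          rw [hN]
          push_cast [Nat.cast_sub hm]
          ring
        rw [this, poch_neg_nat N j hjN, Nat.descFactorial_eq_factorial_mul_choose]
        push_cast
        ring
      rw [e1]
      -- poch (L+m) N = poch (L+m) j * poch ((L+m)+j) (N-j)
      have e2 : poch (L+m) N = poch (L+m) j * poch ((L+m)+j) (N-j) := by
        have : N = j + (N - j) := by omega
        rw [this, poch_add]
        rw [← this]
      -- factorial of m+j
      have e3 : ((m+j).factorial : ℂ) = ((m+j).choose m : ℕ) * (m.factorial : ℂ) * (j.factorial : ℂ) := by
        rw [← Nat.add_choose_mul_factorial_mul_factorial m j, Nat.choose_symm_add]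
        push_cast
        ring
      rw [e3, e2]
      have hfm : ((m.factorial : ℕ) : ℂ) ≠ 0 := Nat.cast_ne_zero.2 (Nat.factorial_ne_zero m)
      have hfj : ((j.factorial : ℕ) : ℂ) ≠ 0 := Nat.cast_ne_zero.2 (Nat.factorial_ne_zero j)
      have hchoose : (((m+j).choose m : ℕ) : ℂ) ≠ 0 := by
        apply Nat.cast_ne_zero.2
        exact Nat.ne_of_gt (Nat.choose_pos (Nat.le_add_right m j))
      have hpLm : poch L m ≠ 0 := poch_ne_zero_of_re_pos hLre m
      have hpLmj : poch (L+m) j ≠ 0 := poch_ne_zero_of_re_pos (hLm_re m) j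
      have hpLmN : poch ((L+m)+j) (N-j) ≠ 0 := by
        have : ((L+m)+j).re = L.re + m + j := by simp
        apply poch_ne_zero_of_re_pos
        rw [this]
        positivity
      field_simp
    rw [Finset.sum_congr rfl key, ← Finset.mul_sum, vandermonde (a+m) N (L+m)]
    have : (L+m) - (a+m) = L - a := by ring
    rw [this]
    ring
  rw [MP, h1, h2]
  rw [Finset.sum_congr rfl (fun m hm => h3 m (Nat.lt_succ_iff.1 (Finset.mem_range.1 hm)))]
  rw [Finset.mul_sum]
  apply Finset.sum_congr rfl
  intro m hm
  have hmn : m ≤ n := Nat.lt_succ_iff.1 (Finset.mem_range.1 hm)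
  have hexp : Complex.exp (Complex.I * n * phi) * q^m
      = Complex.exp (Complex.I * phi * ((n:ℂ) - 2*m)) := by
    rw [hq, ← Complex.exp_nat_mul, ← Complex.exp_add]
    congr 1
    ring
  have hpochn : poch L n = poch L m * poch (L+m) (n-m) := by
    have : n = m + (n - m) := by omega
    rw [this, poch_add, ← this]
  have hneg : poch (-(n:ℂ)) m * (-q)^m = (n.descFactorial m : ℂ) * q^m := by
    rw [poch_neg_nat n m hmn, neg_pow]
    ring_nf
    rw [show m*2 = 2*m from mul_comm m 2, pow_mul]
    norm_num
  have hdesc : ((n.descFactorial m : ℕ) : ℂ) * ((n-m).factorial : ℂ) = (n.factorial : ℂ) := by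
    rw [← Nat.cast_mul]
    congr 1
    rw [Nat.descFactorial_eq_factorial_mul_choose]
    rw [show m.factorial * n.choose m * (n-m).factorial = n.choose m * m.factorial * (n-m).factorial from by ring]
    exact Nat.choose_mul_factorial_mul_factorial hmn
  have hfm : ((m.factorial : ℕ) : ℂ) ≠ 0 := Nat.cast_ne_zero.2 (Nat.factorial_ne_zero m)
  have hfnm : (((n-m).factorial : ℕ) : ℂ) ≠ 0 := Nat.cast_ne_zero.2 (Nat.factorial_ne_zero _)
  have hfn : ((n.factorial : ℕ) : ℂ) ≠ 0 := Nat.cast_ne_zero.2 (Nat.factorial_ne_zero n)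
  have hpLm : poch L m ≠ 0 := poch_ne_zero_of_re_pos hLre m
  have hpLmN : poch (L+m) (n-m) ≠ 0 := poch_ne_zero_of_re_pos (hLm_re m) (n-m)
  rw [hba, hpochn]
  field_simp
  linear_combination (norm := ring_nf)
    (poch a m * poch (L - a) (n-m)) *
      ((((n-m).factorial:ℕ):ℂ) * Complex.exp (Complex.I * n * phi) * hneg
        + ((n.descFactorial m:ℕ):ℂ) * (((n-m).factorial:ℕ):ℂ) * hexp
        + Complex.exp (Complex.I * phi * ((n:ℂ) - 2*m)) * hdesc)

lemma prod_asc_le (s : ℝ) (hs : 0 ≤ s) (k : ℕ) :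
    ∏ i ∈ Finset.range k, (s + i) ≤ (k.factorial : ℝ) * (1 + (k:ℝ)) ^ s := by
  have hfact : ∀ k : ℕ, (k.factorial : ℝ) = ∏ i ∈ Finset.range k, (1 + (i:ℝ)) := by
    intro k
    induction k with
    | zero => simp
    | succ k ih => rw [Finset.prod_range_succ, ← ih, Nat.factorial_succ]; push_cast; ring
  rcases le_or_gt s 1 with h1 | h1
  · calc ∏ i ∈ Finset.range k, (s + i) ≤ ∏ i ∈ Finset.range k, (1 + (i:ℝ)) := by
          apply Finset.prod_le_prod
          · intro i _; positivity
          · intro i _; linarith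
      _ = (k.factorial : ℝ) := (hfact k).symm
      _ ≤ (k.factorial : ℝ) * (1 + (k:ℝ)) ^ s := by
          nth_rewrite 1 [← mul_one (k.factorial : ℝ)]
          apply mul_le_mul_of_nonneg_left _ (by positivity)
          apply Real.one_le_rpow (by linarith) hs
  · induction k with
    | zero => simp
    | succ k ih =>
      rw [Finset.prod_range_succ]
      have hk1 : (0:ℝ) < (k:ℝ) + 1 := by positivity
      have hb : 1 + s * (1/((k:ℝ)+1)) ≤ (1 + 1/((k:ℝ)+1)) ^ s := by
        apply one_add_mul_self_le_rpow_one_add _ (le_of_lt h1)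
        have : (0:ℝ) ≤ 1/((k:ℝ)+1) := by positivity
        linarith
      have key : (s + k) * (1 + (k:ℝ))^s ≤ ((k:ℝ)+1) * (1 + ((k:ℝ)+1))^s := by
        have he : (1 + 1/((k:ℝ)+1)) = ((k:ℝ)+2)/((k:ℝ)+1) := by field_simp; ring
        have hdiv : (((k:ℝ)+2)/((k:ℝ)+1))^s = ((k:ℝ)+2)^s / ((k:ℝ)+1)^s :=
          Real.div_rpow (by positivity) (by positivity) s
        have h2 : s + k ≤ ((k:ℝ)+1) * (((k:ℝ)+2)^s/((k:ℝ)+1)^s) := by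
          calc s + k ≤ (1 + s * (1/((k:ℝ)+1))) * ((k:ℝ)+1) := by field_simp; nlinarith
            _ ≤ ((1 + 1/((k:ℝ)+1))^s) * ((k:ℝ)+1) :=
                mul_le_mul_of_nonneg_right hb (le_of_lt hk1)
            _ = ((k:ℝ)+1) * (((k:ℝ)+2)^s/((k:ℝ)+1)^s) := by rw [he, hdiv]; ring
        have hp : (0:ℝ) < ((k:ℝ)+1)^s := Real.rpow_pos_of_pos hk1 s
        have h3 := mul_le_mul_of_nonneg_right h2 (le_of_lt hp)
        calc (s + k) * (1 + (k:ℝ))^s = (s+k) * ((k:ℝ)+1)^s := by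
              rw [show (1:ℝ)+(k:ℝ) = (k:ℝ)+1 from by ring]
          _ ≤ ((k:ℝ)+1) * (((k:ℝ)+2)^s/((k:ℝ)+1)^s) * ((k:ℝ)+1)^s := h3
          _ = ((k:ℝ)+1) * ((k:ℝ)+2)^s := by field_simp
          _ = ((k:ℝ)+1) * (1 + ((k:ℝ)+1))^s := by
              rw [show (1:ℝ)+((k:ℝ)+1) = (k:ℝ)+2 from by ring]
      calc (∏ i ∈ Finset.range k, (s + i)) * (s + k)
          ≤ ((k.factorial : ℝ) * (1 + (k:ℝ))^s) * (s + k) := by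
            apply mul_le_mul_of_nonneg_right ih
            positivity
        _ = (k.factorial : ℝ) * ((s + k) * (1 + (k:ℝ))^s) := by ring
        _ ≤ (k.factorial : ℝ) * (((k:ℝ)+1) * (1 + ((k:ℝ)+1))^s) := by
            apply mul_le_mul_of_nonneg_left key (by positivity)
        _ = ((k+1).factorial : ℝ) * (1 + ((k+1:ℕ):ℝ))^s := by
            rw [Nat.factorial_succ]; push_cast; ring

lemma poch_norm_le (z : ℂ) (k : ℕ) :
    ‖poch z k‖ ≤ (k.factorial : ℝ) * (1 + (k:ℝ)) ^ ‖z‖ := by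
  have h1 : ‖poch z k‖ ≤ ∏ i ∈ Finset.range k, (‖z‖ + i) := by
    rw [poch, norm_prod]
    apply Finset.prod_le_prod
    · intro i _; positivity
    · intro i _
      calc ‖z + (i:ℂ)‖ ≤ ‖z‖ + ‖(i:ℂ)‖ := norm_add_le _ _
        _ = ‖z‖ + i := by rw [Complex.norm_natCast]
  exact le_trans h1 (prod_asc_le ‖z‖ (norm_nonneg z) k)

theorem MP_bound (lam : ℝ) (hlam : 0 < lam) (phi : ℝ) (hphi : phi ∈ Set.Ioo 0 Real.pi)
    (x : ℝ) :
    ∀ n : ℕ, ‖MP n lam x phi‖ ≤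
      (1 + (n : ℝ)) ^ (2 * ‖(lam : ℂ) + Complex.I * x‖ + 1) := by
  intro n
  rw [MP_eq lam x phi hlam n]
  set a : ℂ := (lam:ℂ) + Complex.I*x with ha
  set s : ℝ := ‖a‖ with hs
  have hs0 : 0 ≤ s := norm_nonneg a
  have hnb : ‖(lam:ℂ) - Complex.I*x‖ = s := by
    rw [show (lam:ℂ) - Complex.I*x = starRingEnd ℂ a from by
      rw [ha]; simp [map_add, map_mul, Complex.conj_ofReal, Complex.conj_I]; ring]
    rw [hs, Complex.norm_conj]
  have hn1 : (0:ℝ) < 1 + (n:ℝ) := by positivity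
  have termbound : ∀ m ∈ Finset.range (n+1),
      ‖poch a m * poch ((lam:ℂ) - Complex.I*x) (n-m)
        / ((m.factorial : ℂ) * ((n-m).factorial : ℂ))
        * Complex.exp (Complex.I * phi * ((n:ℂ) - 2*m))‖ ≤ (1 + (n:ℝ)) ^ (2*s) := by
    intro m hm
    have hmn : m ≤ n := Nat.lt_succ_iff.1 (Finset.mem_range.1 hm)
    have hexp1 : ‖Complex.exp (Complex.I * phi * ((n:ℂ) - 2*m))‖ = 1 := by
      rw [show Complex.I * (phi:ℂ) * ((n:ℂ) - 2*m)
          = ((phi * ((n:ℝ) - 2*m) : ℝ) : ℂ) * Complex.I from by push_cast; ring]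
      rw [Complex.norm_exp_ofReal_mul_I]
    rw [norm_mul, hexp1, mul_one, norm_div, norm_mul, norm_mul]
    rw [Complex.norm_natCast, Complex.norm_natCast]
    have h1 : ‖poch a m‖ ≤ (m.factorial : ℝ) * (1 + (m:ℝ)) ^ s := poch_norm_le a m
    have h2 : ‖poch ((lam:ℂ) - Complex.I*x) (n-m)‖
        ≤ ((n-m).factorial : ℝ) * (1 + ((n-m:ℕ):ℝ)) ^ s := by
      have := poch_norm_le ((lam:ℂ) - Complex.I*x) (n-m)
      rwa [hnb] at this
    calc ‖poch a m‖ * ‖poch ((lam:ℂ) - Complex.I*x) (n-m)‖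
          / ((m.factorial : ℝ) * ((n-m).factorial : ℝ))
        ≤ ((m.factorial : ℝ) * (1 + (m:ℝ)) ^ s)
            * (((n-m).factorial : ℝ) * (1 + ((n-m:ℕ):ℝ)) ^ s)
          / ((m.factorial : ℝ) * ((n-m).factorial : ℝ)) := by
          gcongr
      _ = (1 + (m:ℝ)) ^ s * (1 + ((n-m:ℕ):ℝ)) ^ s := by
          have hfm : ((m.factorial : ℕ) : ℝ) ≠ 0 := Nat.cast_ne_zero.2 (Nat.factorial_ne_zero m)
          have hfnm : (((n-m).factorial : ℕ) : ℝ) ≠ 0 := Nat.cast_ne_zero.2 (Nat.factorial_ne_zero _)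
          field_simp
      _ ≤ (1 + (n:ℝ)) ^ s * (1 + (n:ℝ)) ^ s := by
          gcongr <;> norm_cast <;> omega
      _ = (1 + (n:ℝ)) ^ (2*s) := by
          rw [← Real.rpow_add hn1]
          congr 1
          ring
  calc ‖∑ m ∈ Finset.range (n+1),
        poch a m * poch ((lam:ℂ) - Complex.I*x) (n-m)
          / ((m.factorial : ℂ) * ((n-m).factorial : ℂ))
          * Complex.exp (Complex.I * phi * ((n:ℂ) - 2*m))‖
      ≤ ∑ m ∈ Finset.range (n+1),
        ‖poch a m * poch ((lam:ℂ) - Complex.I*x) (n-m)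
          / ((m.factorial : ℂ) * ((n-m).factorial : ℂ))
          * Complex.exp (Complex.I * phi * ((n:ℂ) - 2*m))‖ := norm_sum_le _ _
    _ ≤ ∑ m ∈ Finset.range (n+1), (1 + (n:ℝ)) ^ (2*s) := Finset.sum_le_sum termbound
    _ = ((n:ℝ)+1) * (1 + (n:ℝ)) ^ (2*s) := by
        rw [Finset.sum_const, Finset.card_range]
        push_cast
        ring
    _ = (1 + (n:ℝ)) ^ (2*s+1) := by
        rw [Real.rpow_add hn1, Real.rpow_one]
        ring
end

section
/- Let λ > 0, φ, ψ ∈ (0, π), x ∈ ℝ, and ρ ∈ ℂ with |ρ|(sin φ + |sin(ψ−φ)|) < sin ψ. Define ρ̃ = ρ sin φ / (sin ψ − ρ sin(ψ−φ)). Then (1−e^{iφ}ρ)^{−λ+ix} (1−e^{−iφ}ρ)^{−λ−ix} = (1 − ρ sin(ψ−φ)/sin ψ)^{−2λ} · (1−e^{iψ}ρ̃)^{−λ+ix} (1−e^{−iψ}ρ̃)^{−λ−ix}. -/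
open Complex Finset

lemma mul_cpow_pos_re {a b : ℂ} (ha : 0 < a.re) (hb : 0 < b.re) (w : ℂ) :
    (a * b) ^ w = a ^ w * b ^ w := by
  have ha0 : a ≠ 0 := by rintro rfl; simp at ha
  have hb0 : b ≠ 0 := by rintro rfl; simp at hb
  have haa : |arg a| < Real.pi / 2 := Complex.abs_arg_lt_pi_div_two_iff.2 (Or.inl ha)
  have hbb : |arg b| < Real.pi / 2 := Complex.abs_arg_lt_pi_div_two_iff.2 (Or.inl hb)
  have hmem : arg a + arg b ∈ Set.Ioc (-Real.pi) Real.pi := by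
    rw [abs_lt] at haa hbb
    constructor <;> [linarith; linarith]
  rw [Complex.cpow_def_of_ne_zero (mul_ne_zero ha0 hb0), Complex.cpow_def_of_ne_zero ha0,
    Complex.cpow_def_of_ne_zero hb0, Complex.log_mul ha0 hb0 hmem, add_mul, Complex.exp_add]

lemma one_sub_pos_re {z : ℂ} (h : ‖z‖ < 1) : 0 < (1 - z).re := by
  have := Complex.re_le_norm z
  simp only [sub_re, one_re]
  linarith

lemma key_pos (phi psi : ℝ) :
    (Real.sin (psi - phi) : ℂ) + Complex.exp (Complex.I * psi) * Real.sin phi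
      = Real.sin psi * Complex.exp (Complex.I * phi) := by
  rw [show Complex.I * (psi:ℂ) = (psi:ℂ) * Complex.I by ring,
      show Complex.I * (phi:ℂ) = (phi:ℂ) * Complex.I by ring,
      Complex.exp_mul_I, Complex.exp_mul_I, Real.sin_sub]
  push_cast [Complex.ofReal_sin, Complex.ofReal_cos]
  ring

lemma key_neg (phi psi : ℝ) :
    (Real.sin (psi - phi) : ℂ) + Complex.exp (-Complex.I * psi) * Real.sin phi
      = Real.sin psi * Complex.exp (-Complex.I * phi) := by
  rw [show -Complex.I * (psi:ℂ) = (-(psi:ℂ)) * Complex.I by ring,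
      show -Complex.I * (phi:ℂ) = (-(phi:ℂ)) * Complex.I by ring,
      Complex.exp_mul_I, Complex.exp_mul_I, Complex.cos_neg, Complex.sin_neg,
      Complex.cos_neg, Complex.sin_neg, Real.sin_sub]
  push_cast [Complex.ofReal_sin, Complex.ofReal_cos]
  ring

theorem MP_power_identity (lam : ℝ) (hlam : 0 < lam) (phi psi : ℝ)
    (hphi : phi ∈ Set.Ioo 0 Real.pi) (hpsi : psi ∈ Set.Ioo 0 Real.pi)
    (x : ℝ) (ρ : ℂ)
    (hρ : ‖ρ‖ * (Real.sin phi + |Real.sin (psi - phi)|) < Real.sin psi) :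
    (1 - Complex.exp (Complex.I * phi) * ρ) ^ (-(lam : ℂ) + Complex.I * x) *
        (1 - Complex.exp (-Complex.I * phi) * ρ) ^ (-(lam : ℂ) - Complex.I * x) =
      (1 - ρ * Real.sin (psi - phi) / Real.sin psi) ^ (-(2 * lam : ℝ) : ℂ) *
        ((1 - Complex.exp (Complex.I * psi) *
              (ρ * Real.sin phi / ((Real.sin psi : ℂ) - ρ * Real.sin (psi - phi)))) ^
            (-(lam : ℂ) + Complex.I * x) *
          (1 - Complex.exp (-Complex.I * psi) *
              (ρ * Real.sin phi / ((Real.sin psi : ℂ) - ρ * Real.sin (psi - phi)))) ^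
            (-(lam : ℂ) - Complex.I * x)) := by
  have hsφ : 0 < Real.sin phi := Real.sin_pos_of_pos_of_lt_pi hphi.1 hphi.2
  have hsψ : 0 < Real.sin psi := Real.sin_pos_of_pos_of_lt_pi hpsi.1 hpsi.2
  have hsψc : (Real.sin psi : ℂ) ≠ 0 := by exact_mod_cast hsψ.ne'
  -- sin ψ ≤ sin φ + |sin(ψ-φ)|
  have hsum : Real.sin psi ≤ Real.sin phi + |Real.sin (psi - phi)| := by
    have h1 : Real.sin psi
        = Real.sin phi * Real.cos (psi - phi) + Real.cos phi * Real.sin (psi - phi) := by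
      rw [← Real.sin_add]; ring_nf
    have h2 : Real.sin phi * Real.cos (psi - phi) ≤ Real.sin phi := by
      nlinarith [Real.cos_le_one (psi - phi)]
    have h3 : Real.cos phi * Real.sin (psi - phi) ≤ |Real.sin (psi - phi)| := by
      calc Real.cos phi * Real.sin (psi - phi) ≤ |Real.cos phi * Real.sin (psi - phi)| :=
            le_abs_self _
        _ = |Real.cos phi| * |Real.sin (psi - phi)| := abs_mul _ _
        _ ≤ 1 * |Real.sin (psi - phi)| := by
            have := Real.abs_cos_le_one phi
            nlinarith [abs_nonneg (Real.sin (psi - phi))]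
        _ = |Real.sin (psi - phi)| := one_mul _
    linarith
  have hρnorm : ‖ρ‖ < 1 := by
    nlinarith [norm_nonneg ρ, abs_nonneg (Real.sin (psi - phi))]
  have hd : ‖ρ * (Real.sin (psi - phi) : ℂ)‖ < Real.sin psi := by
    rw [norm_mul, Complex.norm_real, Real.norm_eq_abs]
    nlinarith [norm_nonneg ρ]
  have hdne : (Real.sin psi : ℂ) - ρ * Real.sin (psi - phi) ≠ 0 := by
    intro h
    rw [sub_eq_zero] at h
    have : ‖ρ * ((Real.sin (psi - phi) : ℝ) : ℂ)‖ = Real.sin psi := by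
      rw [← h, Complex.norm_real, Real.norm_eq_abs, abs_of_pos hsψ]
    linarith [hd, this.ge]
  have hdnorm : Real.sin psi - ‖ρ * (Real.sin (psi - phi) : ℂ)‖
      ≤ ‖(Real.sin psi : ℂ) - ρ * Real.sin (psi - phi)‖ := by
    have := norm_sub_norm_le ((Real.sin psi : ℂ)) (ρ * Real.sin (psi - phi))
    rwa [Complex.norm_real, Real.norm_eq_abs, abs_of_pos hsψ] at this
  -- norms of the pieces
  have hsnorm : ‖ρ * (Real.sin (psi - phi) : ℂ) / (Real.sin psi : ℂ)‖ < 1 := by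
    rw [norm_div, Complex.norm_real, Real.norm_eq_abs, abs_of_pos hsψ, div_lt_one hsψ]
    exact hd
  have hrtnorm : ‖ρ * (Real.sin phi : ℂ) / ((Real.sin psi : ℂ) - ρ * Real.sin (psi - phi))‖
      < 1 := by
    rw [norm_div, div_lt_one (norm_pos_iff.2 hdne)]
    have h1 : ‖ρ * (Real.sin phi : ℂ)‖ = ‖ρ‖ * Real.sin phi := by
      rw [norm_mul, Complex.norm_real, Real.norm_eq_abs, abs_of_pos hsφ]
    have h2 : ‖ρ * (Real.sin (psi - phi) : ℂ)‖ = ‖ρ‖ * |Real.sin (psi - phi)| := by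
      rw [norm_mul, Complex.norm_real, Real.norm_eq_abs]
    rw [h1]
    have : ‖ρ‖ * Real.sin phi < Real.sin psi - ‖ρ‖ * |Real.sin (psi - phi)| := by nlinarith
    calc ‖ρ‖ * Real.sin phi < Real.sin psi - ‖ρ‖ * |Real.sin (psi - phi)| := this
      _ = Real.sin psi - ‖ρ * (Real.sin (psi - phi) : ℂ)‖ := by rw [h2]
      _ ≤ _ := hdnorm
  have hexp1 : ‖Complex.exp (Complex.I * psi)‖ = 1 := by
    rw [Complex.norm_exp]; simp
  have hexp2 : ‖Complex.exp (-Complex.I * psi)‖ = 1 := by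
    rw [Complex.norm_exp]; simp
  have hs_re : 0 < (1 - ρ * Real.sin (psi - phi) / Real.sin psi).re :=
    one_sub_pos_re hsnorm
  have hCre : 0 < (1 - Complex.exp (Complex.I * psi) *
      (ρ * Real.sin phi / ((Real.sin psi : ℂ) - ρ * Real.sin (psi - phi)))).re :=
    one_sub_pos_re (by rw [norm_mul, hexp1, one_mul]; exact hrtnorm)
  have hDre : 0 < (1 - Complex.exp (-Complex.I * psi) *
      (ρ * Real.sin phi / ((Real.sin psi : ℂ) - ρ * Real.sin (psi - phi)))).re :=
    one_sub_pos_re (by rw [norm_mul, hexp2, one_mul]; exact hrtnorm)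
  -- the factorizations
  have hA : (1 - Complex.exp (Complex.I * phi) * ρ)
      = (1 - ρ * Real.sin (psi - phi) / Real.sin psi) *
        (1 - Complex.exp (Complex.I * psi) *
          (ρ * Real.sin phi / ((Real.sin psi : ℂ) - ρ * Real.sin (psi - phi)))) := by
    have hK := key_pos phi psi
    set u : ℂ := (Real.sin (psi - phi) : ℂ) with hu
    set v : ℂ := (Real.sin phi : ℂ) with hv
    set w : ℂ := (Real.sin psi : ℂ) with hw
    set e : ℂ := Complex.exp (Complex.I * psi) with he
    set f : ℂ := Complex.exp (Complex.I * phi) with hf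
    field_simp
    linear_combination ρ * hK
  have hB : (1 - Complex.exp (-Complex.I * phi) * ρ)
      = (1 - ρ * Real.sin (psi - phi) / Real.sin psi) *
        (1 - Complex.exp (-Complex.I * psi) *
          (ρ * Real.sin phi / ((Real.sin psi : ℂ) - ρ * Real.sin (psi - phi)))) := by
    have hK := key_neg phi psi
    set u : ℂ := (Real.sin (psi - phi) : ℂ) with hu
    set v : ℂ := (Real.sin phi : ℂ) with hv
    set w : ℂ := (Real.sin psi : ℂ) with hw
    set e : ℂ := Complex.exp (-Complex.I * psi) with he
    set f : ℂ := Complex.exp (-Complex.I * phi) with hf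
    field_simp
    linear_combination ρ * hK
  have hs0 : (1 - ρ * Real.sin (psi - phi) / Real.sin psi) ≠ 0 := by
    intro h; rw [h] at hs_re; simp at hs_re
  rw [hA, hB, mul_cpow_pos_re hs_re hCre, mul_cpow_pos_re hs_re hDre,
    mul_mul_mul_comm, ← Complex.cpow_add _ _ hs0]
  congr 2
  push_cast
  ring
end

section
/- Let λ > 0, ρ ∈ ℂ, ψ, φ ∈ (0, π), and x ∈ ℝ. Then e^ρ · ₁F₁(λ+ix; 2λ; (e^{−2iφ}−1)ρ) = exp(ρ e^{−iφ} sin(ψ−φ)/sin ψ) · Σ_{k=0}^∞ (sin φ/sin ψ)^k · [P_k^{(λ)}(x; ψ)/((2λ)_k e^{ikφ})] ρ^k, where both sides are entire functions of ρ and the series converges absolutely for all ρ ∈ ℂ. -/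
open Complex Finset

/-- The confluent hypergeometric function `₁F₁(a; b; z)`. -/
noncomputable def F11 (a b z : ℂ) : ℂ :=
  ∑' n : ℕ, poch a n * z ^ n / (poch b n * n.factorial)

private lemma poch_real_eq (b : ℝ) (n : ℕ) :
    poch (b : ℂ) n = ((∏ i ∈ Finset.range n, (b + i) : ℝ) : ℂ) := by
  unfold poch; push_cast; rfl

private lemma poch_real_prod_pos {b : ℝ} (hb : 0 < b) (n : ℕ) :
    0 < ∏ i ∈ Finset.range n, (b + (i:ℝ)) :=
  Finset.prod_pos fun i _ => by positivity

private lemma poch_real_ne_zero {b : ℝ} (hb : 0 < b) (n : ℕ) : poch (b : ℂ) n ≠ 0 := by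
  rw [poch_real_eq]
  exact_mod_cast (poch_real_prod_pos hb n).ne'

private lemma factorial_le_poch {b : ℝ} (hb : 0 < b) (n : ℕ) :
    (n.factorial : ℝ) ≤ (max (1/b) 2) ^ n * ∏ i ∈ Finset.range n, (b + (i:ℝ)) := by
  have hfac : (n.factorial : ℝ) = ∏ i ∈ Finset.range n, ((i:ℝ) + 1) := by
    rw [← Finset.prod_range_add_one_eq_factorial]; push_cast; rfl
  rw [hfac, show (max (1/b) 2) ^ n * ∏ i ∈ Finset.range n, (b + (i:ℝ))
      = ∏ i ∈ Finset.range n, (max (1/b) 2 * (b + (i:ℝ))) from by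
        rw [Finset.prod_mul_distrib, Finset.prod_const, card_range]]
  apply Finset.prod_le_prod (fun i _ => by positivity)
  intro i _
  have hm1 : 1/b ≤ max (1/b) 2 := le_max_left _ _
  have hm2 : (2:ℝ) ≤ max (1/b) 2 := le_max_right _ _
  have p1 : (1/b) * b ≤ max (1/b) 2 * b := mul_le_mul_of_nonneg_right hm1 hb.le
  have p2 : 2 * (i:ℝ) ≤ max (1/b) 2 * i := mul_le_mul_of_nonneg_right hm2 (Nat.cast_nonneg i)
  have p3 : (1/b) * b = 1 := by field_simp
  have hi : (0:ℝ) ≤ i := Nat.cast_nonneg i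
  nlinarith [p1, p2, p3, hi]

private lemma norm_poch_le (a : ℂ) (n : ℕ) :
    ‖poch a n‖ ≤ (‖a‖ + 1) ^ n * n.factorial := by
  unfold poch
  rw [norm_prod]
  have hfac : ((n.factorial : ℝ)) = ∏ i ∈ Finset.range n, ((i:ℝ) + 1) := by
    rw [← Finset.prod_range_add_one_eq_factorial]; push_cast; rfl
  rw [hfac, show (‖a‖ + 1) ^ n * ∏ i ∈ Finset.range n, ((i:ℝ) + 1)
      = ∏ i ∈ Finset.range n, ((‖a‖ + 1) * ((i:ℝ) + 1)) from by
        rw [Finset.prod_mul_distrib, Finset.prod_const, card_range]]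
  refine Finset.prod_le_prod (fun i _ => norm_nonneg _) (fun i _ => ?_)
  have h1 : ‖a + (i:ℂ)‖ ≤ ‖a‖ + i := by
    calc ‖a + (i:ℂ)‖ ≤ ‖a‖ + ‖(i:ℂ)‖ := norm_add_le _ _
      _ = ‖a‖ + i := by rw [Complex.norm_natCast]
  have h2 : ‖a‖ + (i:ℝ) ≤ (‖a‖ + 1) * ((i:ℝ) + 1) := by nlinarith [norm_nonneg a, (Nat.cast_nonneg i : (0:ℝ) ≤ i)]
  linarith

private lemma summable_F11_norm {b : ℝ} (hb : 0 < b) (a z : ℂ) :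
    Summable fun n => ‖poch a n * z ^ n / (poch (b:ℂ) n * (n.factorial : ℂ))‖ := by
  set C := max (1/b) 2 with hC
  have hC0 : (0:ℝ) < C := lt_of_lt_of_le two_pos (le_max_right _ _)
  apply Summable.of_nonneg_of_le (fun n => norm_nonneg _) (fun n => ?_)
    (Real.summable_pow_div_factorial (C * (‖a‖+1) * ‖z‖))
  have hr := poch_real_prod_pos hb n
  have hfp : (0:ℝ) < n.factorial := by positivity
  have hnorm : ‖poch a n * z ^ n / (poch (b:ℂ) n * (n.factorial:ℂ))‖
      = ‖poch a n‖ * ‖z‖ ^ n / ((∏ i ∈ Finset.range n, (b + (i:ℝ))) * n.factorial) := by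
    rw [norm_div, norm_mul, norm_mul, norm_pow, poch_real_eq, Complex.norm_real,
      Complex.norm_natCast, Real.norm_eq_abs, abs_of_pos hr]
  rw [hnorm, mul_pow, mul_pow]
  rw [div_le_div_iff₀ (by positivity) hfp]
  calc ‖poch a n‖ * ‖z‖ ^ n * n.factorial
      ≤ ((‖a‖+1)^n * n.factorial) * ‖z‖ ^ n * (C^n * ∏ i ∈ Finset.range n, (b + (i:ℝ))) := by
        have g1 := norm_poch_le a n
        have g2 := factorial_le_poch hb n
        have : (0:ℝ) ≤ ‖z‖ ^ n := by positivity
        calc ‖poch a n‖ * ‖z‖ ^ n * n.factorial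
            ≤ ((‖a‖+1)^n * n.factorial) * ‖z‖ ^ n * n.factorial := by
              gcongr
          _ ≤ ((‖a‖+1)^n * n.factorial) * ‖z‖ ^ n * (C^n * ∏ i ∈ Finset.range n, (b + (i:ℝ))) := by
              gcongr
    _ = C ^ n * (‖a‖+1) ^ n * ‖z‖ ^ n * ((∏ i ∈ Finset.range n, (b + (i:ℝ))) * n.factorial) := by
        ring

private lemma prod_desc (k : ℕ) : ∀ j, j ≤ k →
    (∏ i ∈ Finset.range j, ((k:ℂ) - i)) * (((k-j).factorial : ℕ) : ℂ) = (k.factorial : ℂ) := by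
  intro j
  induction j with
  | zero => simp
  | succ j ih =>
    intro hj
    have hj' : j ≤ k := by omega
    rw [Finset.prod_range_succ]
    have h1 : ((k:ℂ) - j) = ((k - j : ℕ) : ℂ) := by
      rw [Nat.cast_sub hj']
    have h2 : k - j = (k - (j+1)) + 1 := by omega
    calc (∏ i ∈ Finset.range j, ((k:ℂ) - i)) * ((k:ℂ) - j) * (((k-(j+1)).factorial : ℕ) : ℂ)
        = (∏ i ∈ Finset.range j, ((k:ℂ) - i)) * (((k - j : ℕ):ℂ) * (((k-(j+1)).factorial : ℕ) : ℂ)) := by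
          rw [h1]; ring
      _ = (∏ i ∈ Finset.range j, ((k:ℂ) - i)) * (((k-j).factorial : ℕ) : ℂ) := by
          rw [h2, Nat.factorial_succ]; push_cast; ring
      _ = (k.factorial : ℂ) := ih hj'

private lemma poch_neg_mul (k j : ℕ) (hj : j ≤ k) (u : ℂ) :
    poch (-(k:ℂ)) j * (-u)^j * (((k-j).factorial : ℕ) : ℂ) = (k.factorial : ℂ) * u^j := by
  have h1 : poch (-(k:ℂ)) j * (((k-j).factorial : ℕ) : ℂ) = (-1)^j * k.factorial := by
    unfold poch
    have hc : ∀ i ∈ Finset.range j, (-(k:ℂ) + i) = (-1) * ((k:ℂ) - i) := fun i _ => by ring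
    rw [Finset.prod_congr rfl hc, Finset.prod_mul_distrib, Finset.prod_const, card_range,
      mul_assoc, prod_desc k j hj]
  have h2 : (-u)^j = (-1)^j * u^j := by rw [neg_pow]
  calc poch (-(k:ℂ)) j * (-u)^j * (((k-j).factorial : ℕ) : ℂ)
      = (poch (-(k:ℂ)) j * (((k-j).factorial : ℕ) : ℂ)) * ((-1)^j * u^j) := by rw [h2]; ring
    _ = ((-1)^j * (k.factorial:ℂ)) * ((-1)^j * u^j) := by rw [h1]
    _ = (((-1)*(-1):ℂ))^j * ((k.factorial:ℂ) * u^j) := by rw [mul_pow]; ring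
    _ = (k.factorial : ℂ) * u^j := by norm_num


private lemma key_sum (lam x psi : ℝ) (hlam : 0 < lam) (σ : ℂ) (k : ℕ) :
    ∑ j ∈ Finset.range (k+1),
        poch ((lam:ℂ) + Complex.I*x) j * ((Complex.exp (-2*Complex.I*psi) - 1) * σ)^j
          / (poch ((2*lam:ℝ):ℂ) j * (j.factorial : ℂ)) * (σ^(k-j) / ((k-j).factorial : ℂ))
      = MP k lam x psi / (poch ((2*lam:ℝ):ℂ) k * Complex.exp (Complex.I*k*psi)) * σ^k := by
  have hb2 : (0:ℝ) < 2*lam := by linarith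
  set a := (lam:ℂ) + Complex.I*x with ha
  set u := Complex.exp (-2*Complex.I*psi) - 1 with hu
  have hbk : poch ((2*lam:ℝ):ℂ) k ≠ 0 := poch_real_ne_zero hb2 k
  have hE : Complex.exp (Complex.I*k*psi) ≠ 0 := Complex.exp_ne_zero _
  have hfk : ((k.factorial : ℕ) : ℂ) ≠ 0 := Nat.cast_ne_zero.mpr k.factorial_ne_zero
  have hR : MP k lam x psi / (poch ((2*lam:ℝ):ℂ) k * Complex.exp (Complex.I*k*psi)) * σ^k
      = ∑ j ∈ Finset.range (k+1),
          poch (-(k : ℂ)) j * poch a j / (poch ((2*lam:ℝ):ℂ) j * (j.factorial:ℂ)) *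
            (1 - Complex.exp (-2 * Complex.I * psi)) ^ j * σ^k / (k.factorial : ℂ) := by
    have hMP : MP k lam x psi = (poch ((2*lam:ℝ):ℂ) k * Complex.exp (Complex.I*k*psi)) *
        ((∑ j ∈ Finset.range (k + 1),
          poch (-(k : ℂ)) j * poch a j / (poch ((2*lam:ℝ):ℂ) j * (j.factorial:ℂ)) *
            (1 - Complex.exp (-2 * Complex.I * psi)) ^ j) / (k.factorial : ℂ)) := by
      rw [MP, ← ha]; ring
    rw [hMP, mul_div_cancel_left₀ _ (mul_ne_zero hbk hE), div_mul_eq_mul_div,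
      Finset.sum_mul, Finset.sum_div]
  rw [hR]
  apply Finset.sum_congr rfl
  intro j hj
  have hjk : j ≤ k := by
    have := Finset.mem_range.mp hj; omega
  have hbj : poch ((2*lam:ℝ):ℂ) j ≠ 0 := poch_real_ne_zero hb2 j
  have hfj : ((j.factorial : ℕ) : ℂ) ≠ 0 := Nat.cast_ne_zero.mpr j.factorial_ne_zero
  have hfkj : (((k-j).factorial : ℕ) : ℂ) ≠ 0 := Nat.cast_ne_zero.mpr (k-j).factorial_ne_zero
  have hpow : σ^j * σ^(k-j) = σ^k := by rw [← pow_add, Nat.add_sub_cancel' hjk]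
  have hmul := poch_neg_mul k j hjk u
  have h1e : (1 : ℂ) - Complex.exp (-2*Complex.I*psi) = -u := by rw [hu]; ring
  rw [h1e, mul_pow]
  rw [div_mul_div_comm, div_mul_eq_mul_div, div_mul_eq_mul_div, div_div]
  rw [div_eq_div_iff (mul_ne_zero (mul_ne_zero hbj hfj) hfkj)
    (mul_ne_zero (mul_ne_zero hbj hfj) hfk)]
  linear_combination (poch a j * u^j * poch ((2*lam:ℝ):ℂ) j * (j.factorial:ℂ) * (k.factorial:ℂ)) * hpow
    - (poch a j * σ^k * poch ((2*lam:ℝ):ℂ) j * (j.factorial:ℂ)) * hmul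

private lemma genA (lam : ℝ) (hlam : 0 < lam) (x psi : ℝ) (σ : ℂ) :
    (Summable fun k : ℕ => ‖MP k lam x psi / (poch ((2*lam:ℝ):ℂ) k *
        Complex.exp (Complex.I*k*psi)) * σ^k‖) ∧
    Complex.exp σ * F11 ((lam:ℂ) + Complex.I*x) ((2*lam:ℝ):ℂ)
        ((Complex.exp (-2*Complex.I*psi) - 1) * σ)
      = ∑' k : ℕ, MP k lam x psi / (poch ((2*lam:ℝ):ℂ) k *
          Complex.exp (Complex.I*k*psi)) * σ^k := by
  have hb2 : (0:ℝ) < 2*lam := by linarith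
  have hfs : Summable fun j : ℕ => ‖poch ((lam:ℂ) + Complex.I*x) j *
      ((Complex.exp (-2*Complex.I*psi) - 1) * σ)^j /
      (poch ((2*lam:ℝ):ℂ) j * (j.factorial:ℂ))‖ :=
    summable_F11_norm hb2 _ _
  have hgs : Summable fun m : ℕ => ‖σ^m / ((m.factorial:ℕ) : ℂ)‖ := by
    have he : (fun m : ℕ => ‖σ^m / ((m.factorial:ℕ):ℂ)‖) = fun m => ‖σ‖^m / m.factorial := by
      funext m
      rw [norm_div, norm_pow, Complex.norm_natCast]
    rw [he]
    exact Real.summable_pow_div_factorial ‖σ‖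
  have hkey : ∀ k : ℕ, (∑ j ∈ Finset.range (k+1),
        (poch ((lam:ℂ) + Complex.I*x) j * ((Complex.exp (-2*Complex.I*psi) - 1) * σ)^j /
          (poch ((2*lam:ℝ):ℂ) j * (j.factorial:ℂ))) *
          (σ^(k-j) / (((k-j).factorial:ℕ) : ℂ)))
      = MP k lam x psi / (poch ((2*lam:ℝ):ℂ) k * Complex.exp (Complex.I*k*psi)) * σ^k :=
    fun k => key_sum lam x psi hlam σ k
  constructor
  · have h := summable_norm_sum_mul_range_of_summable_norm hfs hgs
    exact (summable_congr fun k => congrArg norm (hkey k)).mp h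
  · have hexp : Complex.exp σ = ∑' m : ℕ, σ^m / ((m.factorial:ℕ) : ℂ) := by
      rw [Complex.exp_eq_exp_ℂ]
      exact congrFun NormedSpace.exp_eq_tsum_div σ
    rw [hexp, mul_comm]
    rw [show F11 ((lam:ℂ) + Complex.I*x) ((2*lam:ℝ):ℂ)
          ((Complex.exp (-2*Complex.I*psi) - 1) * σ)
        = ∑' j : ℕ, poch ((lam:ℂ) + Complex.I*x) j *
            ((Complex.exp (-2*Complex.I*psi) - 1) * σ)^j /
            (poch ((2*lam:ℝ):ℂ) j * (j.factorial:ℂ)) from rfl]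
    rw [tsum_mul_tsum_eq_tsum_sum_range_of_summable_norm hfs hgs]
    exact tsum_congr hkey

private lemma exp_I_mul' (θ : ℝ) :
    Complex.exp (Complex.I * (θ:ℂ)) = (Real.cos θ : ℂ) + (Real.sin θ : ℂ) * Complex.I := by
  rw [show Complex.I * (θ:ℂ) = (θ:ℂ) * Complex.I by ring, Complex.exp_mul_I,
    ← Complex.ofReal_cos, ← Complex.ofReal_sin]

private lemma exp_neg_I_mul (θ : ℝ) :
    Complex.exp (-Complex.I * (θ:ℂ)) = (Real.cos θ : ℂ) - (Real.sin θ : ℂ) * Complex.I := by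
  rw [show -Complex.I * (θ:ℂ) = (((-θ : ℝ)):ℂ) * Complex.I by push_cast; ring,
    Complex.exp_mul_I, ← Complex.ofReal_cos, ← Complex.ofReal_sin]
  push_cast [Real.cos_neg, Real.sin_neg]
  ring

private lemma exp_neg_two_I (θ : ℝ) :
    Complex.exp (-2 * Complex.I * θ) - 1
      = -2 * Complex.I * (Real.sin θ : ℂ) * Complex.exp (-Complex.I * θ) := by
  rw [show (-2 * Complex.I * (θ:ℂ)) = (-Complex.I * θ) + (-Complex.I * θ) by ring,
    Complex.exp_add, exp_neg_I_mul]
  have hcs : (Real.cos θ : ℂ)^2 + (Real.sin θ : ℂ)^2 = 1 := by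
    have := Real.cos_sq_add_sin_sq θ
    exact_mod_cast congrArg (Complex.ofReal) this
  linear_combination (-(Real.sin θ:ℂ)^2) * Complex.I_sq + hcs

theorem MP_gen_gf_exp (lam : ℝ) (hlam : 0 < lam) (ρ : ℂ) (psi phi : ℝ)
    (hpsi : psi ∈ Set.Ioo 0 Real.pi) (hphi : phi ∈ Set.Ioo 0 Real.pi) (x : ℝ) :
    Summable (fun k : ℕ => ‖((Real.sin phi : ℂ) ^ k / (Real.sin psi : ℂ) ^ k) *
        (MP k lam x psi / (poch ((2 * lam : ℝ) : ℂ) k *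
          Complex.exp (Complex.I * k * phi))) * ρ ^ k‖) ∧
      Complex.exp ρ *
          F11 ((lam : ℂ) + Complex.I * x) ((2 * lam : ℝ) : ℂ)
            ((Complex.exp (-2 * Complex.I * phi) - 1) * ρ) =
        Complex.exp (ρ * Complex.exp (-Complex.I * phi) *
            Real.sin (psi - phi) / Real.sin psi) *
          ∑' k : ℕ, ((Real.sin phi : ℂ) ^ k / (Real.sin psi : ℂ) ^ k) *
            (MP k lam x psi / (poch ((2 * lam : ℝ) : ℂ) k *
              Complex.exp (Complex.I * k * phi))) * ρ ^ k := by
  obtain ⟨hψ0, hψπ⟩ := hpsi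
  have hsψ : Real.sin psi ≠ 0 := (Real.sin_pos_of_pos_of_lt_pi hψ0 hψπ).ne'
  have hsψC : ((Real.sin psi : ℝ) : ℂ) ≠ 0 := by exact_mod_cast hsψ
  have hb2 : (0:ℝ) < 2*lam := by linarith
  set σ : ℂ := ρ * Complex.exp (Complex.I * ((psi:ℂ) - (phi:ℂ))) * (Real.sin phi : ℂ)
      / (Real.sin psi : ℂ) with hσ
  have hT : ∀ k : ℕ, ((Real.sin phi : ℂ) ^ k / (Real.sin psi : ℂ) ^ k) *
        (MP k lam x psi / (poch ((2 * lam : ℝ) : ℂ) k *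
          Complex.exp (Complex.I * k * phi))) * ρ ^ k
      = MP k lam x psi / (poch ((2*lam:ℝ):ℂ) k * Complex.exp (Complex.I*k*psi)) * σ^k := by
    intro k
    have hbk := poch_real_ne_zero hb2 k
    have hEφ : Complex.exp (Complex.I*k*phi) ≠ 0 := Complex.exp_ne_zero _
    have hk : Complex.exp (Complex.I * ((psi:ℂ)-(phi:ℂ)))^k * Complex.exp (Complex.I*(k:ℂ)*phi)
        = Complex.exp (Complex.I*k*psi) := by
      rw [← Complex.exp_nat_mul, ← Complex.exp_add]
      congr 1
      ring
    rw [hσ, ← hk, div_pow, mul_pow, mul_pow]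
    have hEΔ : Complex.exp (Complex.I * ((psi:ℂ)-(phi:ℂ))) ≠ 0 := Complex.exp_ne_zero _
    have hsinC : Complex.sin (psi:ℂ) ≠ 0 := by rw [← Complex.ofReal_sin]; exact hsψC
    have hbk' : poch (2*(lam:ℂ)) k ≠ 0 := by
      have h := hbk
      rwa [show ((2*lam:ℝ):ℂ) = 2*(lam:ℂ) by push_cast; ring] at h
    field_simp [hsinC, hbk', hEφ, hEΔ]
  have hU : (Complex.exp (-2*Complex.I*psi) - 1) * σ
      = (Complex.exp (-2 * Complex.I * phi) - 1) * ρ := by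
    have hE : Complex.exp (-Complex.I * (psi:ℂ)) * Complex.exp (Complex.I * ((psi:ℂ)-(phi:ℂ)))
        = Complex.exp (-Complex.I * (phi:ℂ)) := by
      rw [← Complex.exp_add]; congr 1; ring
    rw [exp_neg_two_I psi, exp_neg_two_I phi, hσ, ← hE, ← mul_div_assoc,
      div_eq_iff hsψC]
    ring
  have hExp : Complex.exp (ρ * Complex.exp (-Complex.I * phi) *
        Real.sin (psi - phi) / Real.sin psi) * Complex.exp σ = Complex.exp ρ := by
    rw [← Complex.exp_add]
    congr 1
    have e2 : Complex.exp (Complex.I * ((psi:ℂ)-(phi:ℂ)))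
        = (Real.cos (psi-phi):ℂ) + (Real.sin (psi-phi):ℂ) * Complex.I := by
      rw [show ((psi:ℂ)-(phi:ℂ)) = (((psi-phi : ℝ)):ℂ) by push_cast; ring]
      exact exp_I_mul' (psi-phi)
    have e3 : ((Real.sin psi : ℝ) : ℂ) = (Real.sin (psi-phi):ℂ) * (Real.cos phi:ℂ)
        + (Real.cos (psi-phi):ℂ) * (Real.sin phi:ℂ) := by
      have h : Real.sin psi = Real.sin (psi-phi) * Real.cos phi
          + Real.cos (psi-phi) * Real.sin phi := by
        rw [← Real.sin_add]
        congr 1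
        ring
      exact_mod_cast congrArg (Complex.ofReal) h
    rw [hσ, ← add_div, div_eq_iff hsψC, exp_neg_I_mul phi, e2, e3]
    ring
  obtain ⟨hsum, heq⟩ := genA lam hlam x psi σ
  constructor
  · exact (summable_congr fun k => congrArg norm (hT k)).mpr hsum
  · rw [tsum_congr hT, ← heq, hU, ← mul_assoc, hExp]
end
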